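/- Let i ≤ n and let T₁, T₂ be non-crossing spanning trees of n points in convex position such that T₁ contains all border edges {j, j+1} for j < i, and T₂ contains no edge {j,k} with both j > i and k > i. Then there exists a flip sequence between T₁ and T₂ of length at most |T₁ Δ T₂| / 2. -/

import Mathlib

open Finset

/-- An edge (chord) on `n` points in convex position, as an unordered pair of indices. -/
abbrev Edge (n : ℕ) := Sym2 (Fin n)

/-- The cyclic successor of a point. -/
def next {n : ℕ} (i : Fin n) : Fin n := ⟨((i : ℕ) + 1) % n, Nat.mod_lt _ i.pos⟩


/-- Chords `{a,b}` (with `a<b`) and `{c,d}` (with `c<d`) cross iff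
`a<c<b<d` or `c<a<d<b`. -/
def Cross {n : ℕ} (e f : Edge n) : Prop :=
  ∃ a b c d : Fin n, e = s(a, b) ∧ f = s(c, d) ∧ a < b ∧ c < d ∧
    ((a < c ∧ c < b ∧ b < d) ∨ (c < a ∧ a < d ∧ d < b))

/-- A set of chords is non-crossing if no two of its chords cross. -/
def NonCrossing {n : ℕ} (E : Finset (Edge n)) : Prop :=
  ∀ e ∈ E, ∀ f ∈ E, ¬ Cross e f

/-- A border edge joins two cyclically consecutive points (this includes `{n-1, 0}`,
i.e. `{v_n, v_1}`, since addition in `Fin n` wraps around). -/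
def IsBorder {n : ℕ} (e : Edge n) : Prop := ∃ i : Fin n, e = s(i, next i)

/-- A spanning tree on the `n` points, given by its edge set: loopless, connected,
with `n - 1` edges. -/
def IsSpanningTree {n : ℕ} (T : Finset (Edge n)) : Prop :=
  (SimpleGraph.fromEdgeSet (T : Set (Edge n))).Connected ∧
    T.card = n - 1 ∧ ∀ e ∈ T, ¬ e.IsDiag

/-- A non-crossing spanning tree. -/
def NCST {n : ℕ} (T : Finset (Edge n)) : Prop := IsSpanningTree T ∧ NonCrossing T

/-- A flip removes one edge and adds another so that the result is again a
non-crossing spanning tree. -/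
def Flip {n : ℕ} (T T' : Finset (Edge n)) : Prop :=
  NCST T ∧ NCST T' ∧ ∃ e ∈ T, ∃ f, f ∉ T ∧ T' = insert f (T.erase e)

/-- A flip sequence of length `k` from `T₁` to `T₂`. -/
def FlipSeq {n : ℕ} (T₁ T₂ : Finset (Edge n)) (k : ℕ) : Prop :=
  ∃ f : ℕ → Finset (Edge n), f 0 = T₁ ∧ f k = T₂ ∧ ∀ i < k, Flip (f i) (f (i + 1))

/-- There is a flip sequence from `T₁` to `T₂` of length at most `m`. -/
def FlipDistLE {n : ℕ} (T₁ T₂ : Finset (Edge n)) (m : ℕ) : Prop :=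
  ∃ k ≤ m, FlipSeq T₁ T₂ k

namespace NCSTAux

open SimpleGraph

variable {n : ℕ}

/-- The graph of an edge finset. -/
abbrev gr (T : Finset (Edge n)) : SimpleGraph (Fin n) :=
  SimpleGraph.fromEdgeSet (T : Set (Edge n))

lemma gr_adj {T : Finset (Edge n)} {a b : Fin n} :
    (gr T).Adj a b ↔ s(a, b) ∈ T ∧ a ≠ b := by
  simp [gr, SimpleGraph.fromEdgeSet_adj]

lemma gr_edgeSet_sub {T : Finset (Edge n)} : (gr T).edgeSet ⊆ (T : Set (Edge n)) := by
  rw [SimpleGraph.edgeSet_fromEdgeSet]; exact Set.diff_subset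

lemma sym2_sorted_eq {a b c d : Fin n} (hab : a < b) (hcd : c < d)
    (h : s(a, b) = s(c, d)) : a = c ∧ b = d := by
  rw [Sym2.eq_iff] at h
  rcases h with ⟨h1, h2⟩ | ⟨h1, h2⟩
  · exact ⟨h1, h2⟩
  · subst h1; subst h2; exact absurd hcd (asymm hab)

lemma cross_symm {e f : Edge n} (h : Cross e f) : Cross f e := by
  obtain ⟨a, b, c, d, he, hf, hab, hcd, hpat⟩ := h
  exact ⟨c, d, a, b, hf, he, hcd, hab, hpat.symm⟩

lemma not_cross_self (e : Edge n) : ¬ Cross e e := by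
  rintro ⟨a, b, c, d, he, hf, hab, hcd, hpat⟩
  rw [he] at hf
  obtain ⟨rfl, rfl⟩ := sym2_sorted_eq hab hcd hf
  rcases hpat with ⟨h, _, _⟩ | ⟨h, _, _⟩ <;> exact lt_irrefl _ h

lemma edge_rep {e : Edge n} (h : ¬ e.IsDiag) : ∃ a b : Fin n, a < b ∧ e = s(a, b) := by
  induction e using Sym2.ind with
  | _ x y =>
    rcases lt_trichotomy x y with hl | rfl | hl
    · exact ⟨x, y, hl, rfl⟩
    · simp [Sym2.mk_isDiag_iff] at h
    · exact ⟨y, x, hl, Sym2.eq_swap⟩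

lemma walk_reach {G H : SimpleGraph (Fin n)}
    (hadj : ∀ a b : Fin n, G.Adj a b → H.Reachable a b) :
    ∀ {x y : Fin n}, G.Walk x y → H.Reachable x y := by
  intro x y w
  induction w with
  | nil => exact Reachable.refl _
  | cons h' _ ih => exact (hadj _ _ h').trans ih

lemma connected_patch {G H : SimpleGraph (Fin n)} (hG : G.Connected)
    (hadj : ∀ a b : Fin n, G.Adj a b → H.Reachable a b) : H.Connected := by
  have : Nonempty (Fin n) := hG.nonempty
  exact ⟨fun x y => walk_reach hadj ((hG x y).some)⟩

lemma card_le_of_connected {T : Finset (Edge n)} (hconn : (gr T).Connected) :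
    n - 1 ≤ T.card := by
  classical
  obtain ⟨v₀⟩ := hconn.nonempty
  have hex : ∀ w : Fin n, ∃ p : (gr T).Walk w v₀, p.length = (gr T).dist w v₀ :=
    fun w => (hconn w v₀).exists_walk_length_eq_dist
  choose p hp using hex
  have key : (Finset.univ.erase v₀).card ≤ T.card := by
    apply Finset.card_le_card_of_injOn
      (fun w => if hw : (p w).Nil then s(w, w) else ((p w).firstDart hw).edge)
    · intro w hw
      have hwv : w ≠ v₀ := Finset.ne_of_mem_erase hw
      dsimp only
      rw [dif_neg (Walk.not_nil_of_ne hwv)]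
      exact Finset.mem_coe.mp (gr_edgeSet_sub (((p w).firstDart _).edge_mem))
    · intro a ha b hb hfab
      by_contra hab
      have hav : a ≠ v₀ := Finset.ne_of_mem_erase (Finset.mem_coe.mp ha)
      have hbv : b ≠ v₀ := Finset.ne_of_mem_erase (Finset.mem_coe.mp hb)
      have hna : ¬ (p a).Nil := SimpleGraph.Walk.not_nil_of_ne hav
      have hnb : ¬ (p b).Nil := SimpleGraph.Walk.not_nil_of_ne hbv
      dsimp only at hfab
      rw [dif_neg hna, dif_neg hnb, Walk.edge_firstDart, Walk.edge_firstDart,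
        Sym2.eq_iff] at hfab
      have hstep : ∀ (x y : Fin n) (hx : ¬ (p x).Nil), (p x).getVert 1 = y →
          (gr T).dist y v₀ + 1 ≤ (gr T).dist x v₀ := by
        intro x y hx hxy
        have ht := Walk.length_tail_add_one hx (p := p x)
        have hle : (gr T).dist y v₀ ≤ (p x).tail.length := hxy ▸ SimpleGraph.dist_le _
        have hpx := hp x
        omega
      rcases hfab with ⟨h1, h2⟩ | ⟨h1, h2⟩
      · exact hab h1
      · have s1 := hstep a b hna h2
        have s2 := hstep b a hnb h1.symm
        omega
  have h1 : (Finset.univ.erase v₀).card = n - 1 := by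
    rw [Finset.card_erase_of_mem (Finset.mem_univ _), Finset.card_univ, Fintype.card_fin]
  omega

lemma isAcyclic_of_card {T : Finset (Edge n)} (hconn : (gr T).Connected)
    (hcard : T.card = n - 1) : (gr T).IsAcyclic := by
  classical
  rw [isAcyclic_iff_forall_adj_isBridge]
  intro v w hadj
  by_contra hnb
  rw [isBridge_iff] at hnb
  push_neg at hnb
  have hreach : (gr T \ SimpleGraph.fromEdgeSet {s(v, w)}).Reachable v w := hnb
  have hvw : v ≠ w := hadj.ne
  have hmem : s(v, w) ∈ T := (gr_adj.mp hadj).1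
  have hid : (gr T \ SimpleGraph.fromEdgeSet {s(v, w)}) = gr (T.erase s(v, w)) := by
    ext a b
    simp only [SimpleGraph.sdiff_adj, SimpleGraph.fromEdgeSet_adj, Set.mem_singleton_iff,
      Finset.mem_coe, Finset.mem_erase]
    tauto
  rw [hid] at hreach
  have hconn' : (gr (T.erase s(v, w))).Connected := by
    apply connected_patch hconn
    intro a b hab
    rcases gr_adj.mp hab with ⟨habT, habne⟩
    by_cases he : s(a, b) = s(v, w)
    · rw [Sym2.eq_iff] at he
      rcases he with ⟨rfl, rfl⟩ | ⟨rfl, rfl⟩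
      · exact hreach
      · exact hreach.symm
    · exact (gr_adj.mpr ⟨Finset.mem_erase.mpr ⟨he, habT⟩, habne⟩).reachable
  have hle := card_le_of_connected hconn'
  rw [Finset.card_erase_of_mem hmem] at hle
  have hTpos : 0 < T.card := Finset.card_pos.mpr ⟨_, hmem⟩
  omega

lemma mem_of_reach {T'' E : Finset (Edge n)} (hST : IsSpanningTree T'') (hE : E ⊆ T'')
    {u v : Fin n} (huv : u ≠ v) (hmem : s(u, v) ∈ T'')
    (hreach : (gr E).Reachable u v) : s(u, v) ∈ E := by
  obtain ⟨hconn, hcard, hdiag⟩ := hST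
  have hacy : (gr T'').IsAcyclic := isAcyclic_of_card hconn hcard
  obtain ⟨w⟩ := hreach
  have hpath : w.bypass.IsPath := w.bypass_isPath
  have hsub : ∀ e ∈ w.bypass.edges, e ∈ (gr T'').edgeSet := by
    intro e he
    have h1 : e ∈ (gr E).edgeSet := w.bypass.edges_subset_edgeSet he
    rw [SimpleGraph.edgeSet_fromEdgeSet] at h1 ⊢
    exact ⟨hE (Finset.mem_coe.mp h1.1), h1.2⟩
  have hqpath : (w.bypass.transfer (gr T'') hsub).IsPath := hpath.transfer hsub
  have hadj : (gr T'').Adj u v := gr_adj.mpr ⟨hmem, huv⟩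
  have huniq := hacy.path_unique ⟨w.bypass.transfer (gr T'') hsub, hqpath⟩
    (SimpleGraph.Path.singleton hadj)
  have hq : (w.bypass.transfer (gr T'') hsub).edges = [s(u, v)] := by
    have := congrArg (fun r : (gr T'').Path u v => r.1.edges) huniq
    simpa [SimpleGraph.Path.singleton] using this
  have hmm : s(u, v) ∈ w.bypass.edges := by
    rw [← Walk.edges_transfer w.bypass hsub, hq]
    exact List.mem_cons_self
  exact Finset.mem_coe.mp (gr_edgeSet_sub (w.bypass.edges_subset_edgeSet hmm))

lemma patch_walk {G H : SimpleGraph (Fin n)} {x y : Fin n} :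
    ∀ {u v : Fin n} (w : G.Walk u v), w.IsPath → s(x, y) ∈ w.edges →
      (∀ e' ∈ w.edges, e' ≠ s(x, y) → e' ∈ H.edgeSet) → H.Reachable u v →
      H.Reachable x y := by
  intro u v w
  induction w with
  | nil => intro _ he _ _; simp at he
  | @cons a c b hadj w' ih =>
    intro hp he hother huv
    by_cases hfirst : s(a, c) = s(x, y)
    · have hnotin : s(a, c) ∉ w'.edges := by
        have hnd := hp.isTrail.edges_nodup
        rw [Walk.edges_cons, List.nodup_cons] at hnd
        exact hnd.1
      have hsub : ∀ e' ∈ w'.edges, e' ∈ H.edgeSet := by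
        intro e' he'
        refine hother e' (by simp [he']) ?_
        rintro rfl
        exact hnotin (hfirst ▸ he')
      have hcb : H.Reachable c b := ⟨w'.transfer H hsub⟩
      have hac : H.Reachable a c := huv.trans hcb.symm
      rw [Sym2.eq_iff] at hfirst
      rcases hfirst with ⟨rfl, rfl⟩ | ⟨rfl, rfl⟩
      · exact hac
      · exact hac.symm
    · have hmem : s(x, y) ∈ w'.edges := by
        rcases List.mem_cons.mp he with h | h
        · exact absurd h.symm hfirst
        · exact h
      have hadjH : H.Adj a c :=
        (H.mem_edgeSet).mp (hother s(a, c) (by simp) hfirst)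
      exact ih hp.of_cons hmem (fun e' he' hne' => hother e' (by simp [he']) hne')
        ((hadjH.symm.reachable).trans huv)

lemma exchange {T T'' : Finset (Edge n)} (hT : IsSpanningTree T) (hT'' : IsSpanningTree T'')
    {u v : Fin n} (huv : u ≠ v) (hf'' : s(u, v) ∈ T'') (hfT : s(u, v) ∉ T) :
    ∃ e ∈ T, e ∉ T'' ∧ IsSpanningTree (insert s(u, v) (T.erase e)) := by
  obtain ⟨hconn, hcard, hdiag⟩ := hT
  obtain ⟨w0⟩ := hconn u v
  have hpath : w0.bypass.IsPath := w0.bypass_isPath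
  have hpe : ∀ e ∈ w0.bypass.edges, e ∈ T := fun e he =>
    Finset.mem_coe.mp (gr_edgeSet_sub (w0.bypass.edges_subset_edgeSet he))
  have hex : ∃ e ∈ w0.bypass.edges, e ∉ T'' := by
    by_contra hall
    push_neg at hall
    have hsub : ∀ e ∈ w0.bypass.edges, e ∈ (gr (T ∩ T'')).edgeSet := by
      intro e he
      have h1 := w0.bypass.edges_subset_edgeSet he
      rw [SimpleGraph.edgeSet_fromEdgeSet] at h1 ⊢
      exact ⟨Finset.mem_coe.mpr (Finset.mem_inter.mpr ⟨hpe e he, hall e he⟩), h1.2⟩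
    have hre : (gr (T ∩ T'')).Reachable u v := ⟨w0.bypass.transfer _ hsub⟩
    have := mem_of_reach hT'' Finset.inter_subset_right huv hf'' hre
    exact hfT (Finset.mem_inter.mp this).1
  obtain ⟨e, hep, heT''⟩ := hex
  have heT : e ∈ T := hpe e hep
  have hediag : ¬ e.IsDiag := hdiag e heT
  obtain ⟨x, y, hxy, rfl⟩ := edge_rep hediag
  have hfne : s(u, v) ∉ T.erase s(x, y) := fun h => hfT (Finset.mem_of_mem_erase h)
  have hTpos : 0 < T.card := Finset.card_pos.mpr ⟨_, heT⟩
  refine ⟨s(x, y), heT, heT'', ?_, ?_, ?_⟩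
  · -- connectivity
    apply connected_patch hconn
    intro a b hab
    rcases gr_adj.mp hab with ⟨habT, habne⟩
    have hreach_xy : (gr (insert s(u, v) (T.erase s(x, y)))).Reachable x y := by
      apply patch_walk w0.bypass hpath hep
      · intro e' he' hne'
        have he'T : e' ∈ T := hpe e' he'
        have hd : ¬ e'.IsDiag := hdiag e' he'T
        rw [SimpleGraph.edgeSet_fromEdgeSet]
        exact ⟨Finset.mem_coe.mpr
          (Finset.mem_insert_of_mem (Finset.mem_erase.mpr ⟨hne', he'T⟩)), hd⟩
      · exact (gr_adj.mpr ⟨Finset.mem_insert_self _ _, huv⟩).reachable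
    by_cases he : s(a, b) = s(x, y)
    · rw [Sym2.eq_iff] at he
      rcases he with ⟨rfl, rfl⟩ | ⟨rfl, rfl⟩
      · exact hreach_xy
      · exact hreach_xy.symm
    · exact (gr_adj.mpr ⟨Finset.mem_insert_of_mem (Finset.mem_erase.mpr ⟨he, habT⟩),
        habne⟩).reachable
  · rw [Finset.card_insert_of_notMem hfne, Finset.card_erase_of_mem heT]
    omega
  · intro e' he'
    rcases Finset.mem_insert.mp he' with rfl | h
    · simp [Sym2.mk_isDiag_iff]; exact huv
    · exact hdiag e' (Finset.mem_of_mem_erase h)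


lemma flipSeq_refl (T : Finset (Edge n)) : FlipSeq T T 0 :=
  ⟨fun _ => T, rfl, rfl, fun i h => absurd h (Nat.not_lt_zero i)⟩

lemma flipSeq_cons {T₁ T' T₂ : Finset (Edge n)} {k : ℕ} (h : Flip T₁ T')
    (hs : FlipSeq T' T₂ k) : FlipSeq T₁ T₂ (k + 1) := by
  obtain ⟨f, hf0, hfk, hstep⟩ := hs
  refine ⟨fun j => if j = 0 then T₁ else f (j - 1), by simp, by simp [hfk], ?_⟩
  intro j hj
  rcases Nat.eq_zero_or_pos j with rfl | hpos
  · simpa [hf0] using h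
  · have h1 : j ≠ 0 := by omega
    have h2 : j + 1 ≠ 0 := by omega
    simp only [if_neg h1, if_neg h2]
    have he1 : j - 1 + 1 = j := by omega
    have he2 : j + 1 - 1 = j := by omega
    rw [he2, ← he1]
    exact hstep (j - 1) (by omega)

lemma flipSeq_snoc {T₁ T' T₂ : Finset (Edge n)} {k : ℕ} (hs : FlipSeq T₁ T' k)
    (h : Flip T' T₂) : FlipSeq T₁ T₂ (k + 1) := by
  obtain ⟨f, hf0, hfk, hstep⟩ := hs
  refine ⟨fun j => if j ≤ k then f j else T₂, by simp [hf0], by simp, ?_⟩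
  intro j hj
  by_cases hjk : j + 1 ≤ k
  · simp only [if_pos (by omega : j ≤ k), if_pos hjk]
    exact hstep j (by omega)
  · have hj' : j = k := by omega
    subst hj'
    simp only [if_pos le_rfl, if_neg (by omega : ¬ (j + 1 ≤ j)), hfk]
    exact h

lemma border_compat {a : Fin n} (h : (a : ℕ) + 1 < n) (e : Edge n) :
    ¬ Cross s(a, next a) e ∧ ¬ Cross e s(a, next a) := by
  have hval : ((next a : Fin n) : ℕ) = (a : ℕ) + 1 := by
    simp only [next]
    exact Nat.mod_eq_of_lt h
  have hlt : a < next a := by rw [Fin.lt_def, hval]; omega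
  constructor
  · rintro ⟨p, q, c, d, he, hf, hpq, hcd, hpat⟩
    obtain ⟨rfl, rfl⟩ := sym2_sorted_eq hlt hpq he
    rcases hpat with ⟨h1, h2, h3⟩ | ⟨h1, h2, h3⟩
    · rw [Fin.lt_def] at h1 h2; omega
    · rw [Fin.lt_def] at h2 h3; omega
  · rintro ⟨p, q, c, d, he, hf, hpq, hcd, hpat⟩
    obtain ⟨rfl, rfl⟩ := sym2_sorted_eq hlt hcd hf
    rcases hpat with ⟨h1, h2, h3⟩ | ⟨h1, h2, h3⟩
    · rw [Fin.lt_def] at h1 h2 h3; omega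
    · rw [Fin.lt_def] at h1 h2; omega

lemma KL {i : ℕ} (hi : i ≤ n) {T₁ T₂ : Finset (Edge n)}
    (h₁ : NCST T₁) (h₂ : NCST T₂)
    (hB₁ : ∀ j : Fin n, (j : ℕ) + 1 < i → s(j, next j) ∈ T₁)
    (hB₂ : ∀ j : Fin n, (j : ℕ) + 1 < i → s(j, next j) ∈ T₂)
    (hT₂ : ∀ a b : Fin n, s(a, b) ∈ T₂ → (a : ℕ) < i ∨ (b : ℕ) < i)
    (hne : (T₂ \ T₁).Nonempty) :
    ∃ f ∈ T₂ \ T₁, ∀ g ∈ T₁, ¬ Cross f g := by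
  classical
  by_contra hcon
  push_neg at hcon
  obtain ⟨hst₁, hnc₁⟩ := h₁
  obtain ⟨hst₂, hnc₂⟩ := h₂
  obtain ⟨hconn₁, hcard₁, hdiag₁⟩ := hst₁
  obtain ⟨hconn₂, hcard₂, hdiag₂⟩ := hst₂
  have hn : 0 < n := (hconn₁.nonempty.some).pos
  set v₀ : Fin n := ⟨0, hn⟩ with hv₀
  set D : Finset (Edge n) := T₁ ∩ T₂ with hD
  set R₀ : Fin n → Prop := fun w => (gr D).Reachable v₀ w with hR₀
  have hR₀v₀ : R₀ v₀ := SimpleGraph.Reachable.refl _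
  have hDadj : ∀ a b : Fin n, s(a, b) ∈ T₁ → s(a, b) ∈ T₂ → a ≠ b → R₀ a → R₀ b := by
    intro a b h1 h2 hab ha
    exact ha.trans (gr_adj.mpr ⟨Finset.mem_inter.mpr ⟨h1, h2⟩, hab⟩).reachable
  have k1 : ∀ w : Fin n, (w : ℕ) < i → R₀ w := by
    intro w hw
    suffices h : ∀ m : ℕ, ∀ hm : m < i, R₀ ⟨m, lt_of_lt_of_le hm hi⟩ by
      have := h w.1 hw
      rwa [Fin.eta] at this
    intro m
    induction m with
    | zero => intro _; exact hR₀v₀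
    | succ m ihm =>
      intro hm
      have hmi : m < i := by omega
      have hmn : m < n := by omega
      have hnext : next (⟨m, hmn⟩ : Fin n) = ⟨m + 1, by omega⟩ := by
        apply Fin.ext
        simp only [next]
        exact Nat.mod_eq_of_lt (by omega)
      have hmem₁ := hB₁ ⟨m, hmn⟩ (by simpa using hm)
      have hmem₂ := hB₂ ⟨m, hmn⟩ (by simpa using hm)
      rw [hnext] at hmem₁ hmem₂
      exact hDadj _ _ hmem₁ hmem₂ (Fin.ne_of_val_ne (by simp)) (ihm hmi)
  have k2 : ∀ a b : Fin n, s(a, b) ∈ T₂ → a ≠ b → R₀ a → R₀ b → s(a, b) ∈ T₁ := by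
    intro a b hab hne' ha hb
    have := mem_of_reach ⟨hconn₂, hcard₂, hdiag₂⟩ Finset.inter_subset_right hne' hab
      (ha.symm.trans hb)
    exact (Finset.mem_inter.mp this).1
  have k3 : ∀ a b : Fin n, s(a, b) ∈ T₁ → a ≠ b → R₀ a → R₀ b → s(a, b) ∈ T₂ := by
    intro a b hab hne' ha hb
    have := mem_of_reach ⟨hconn₁, hcard₁, hdiag₁⟩ Finset.inter_subset_left hne' hab
      (ha.symm.trans hb)
    exact (Finset.mem_inter.mp this).2
  have k4 : ∀ w : Fin n, ¬ R₀ w → i ≤ (w : ℕ) ∧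
      ∃ x : Fin n, (x : ℕ) < i ∧ s(x, w) ∈ T₂ \ T₁ := by
    intro w hw
    have hwi : i ≤ (w : ℕ) := by
      by_contra h
      exact hw (k1 w (by omega))
    refine ⟨hwi, ?_⟩
    have hwv : w ≠ v₀ := by rintro rfl; exact hw hR₀v₀
    obtain ⟨wk⟩ := hconn₂ w v₀
    cases wk with
    | nil => exact absurd rfl hwv
    | @cons _ c _ hadj wk' =>
      rcases gr_adj.mp hadj with ⟨hmem, hne'⟩
      have hci : (c : ℕ) < i := by
        rcases hT₂ w c hmem with h | h
        · omega
        · exact h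
      have hmem' : s(c, w) ∈ T₂ := by rwa [Sym2.eq_swap] at hmem
      refine ⟨c, hci, Finset.mem_sdiff.mpr ⟨hmem', ?_⟩⟩
      intro hT1mem
      exact hw (hDadj c w hT1mem hmem' hne'.symm (k1 c hci))
  have k5 : ∀ x₁ w₁ x₂ w₂ : Fin n, s(x₁, w₁) ∈ T₂ → s(x₂, w₂) ∈ T₂ →
      (x₁ : ℕ) < i → (x₂ : ℕ) < i → i ≤ (w₁ : ℕ) → i ≤ (w₂ : ℕ) →
      (w₁ : ℕ) < (w₂ : ℕ) → (x₂ : ℕ) ≤ (x₁ : ℕ) := by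
    intro x₁ w₁ x₂ w₂ h1 h2 hx1 hx2 hw1 hw2 hww
    by_contra hlt
    push_neg at hlt
    have hcross : Cross s(x₁, w₁) s(x₂, w₂) :=
      ⟨x₁, w₁, x₂, w₂, rfl, rfl, Fin.lt_def.mpr (by omega), Fin.lt_def.mpr (by omega),
        Or.inl ⟨Fin.lt_def.mpr (by omega), Fin.lt_def.mpr (by omega),
          Fin.lt_def.mpr (by omega)⟩⟩
    exact hnc₂ _ h1 _ h2 hcross
  have k6 : ∀ (x w : Fin n), (x : ℕ) < (w : ℕ) → ∀ gg ∈ T₁, Cross s(x, w) gg →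
      ∃ c d : Fin n, gg = s(c, d) ∧ (c : ℕ) < (d : ℕ) ∧
        (((x : ℕ) < (c : ℕ) ∧ (c : ℕ) < (w : ℕ) ∧ (w : ℕ) < (d : ℕ)) ∨
         ((c : ℕ) < (x : ℕ) ∧ (x : ℕ) < (d : ℕ) ∧ (d : ℕ) < (w : ℕ))) := by
    intro x w hxw gg hg hcr
    obtain ⟨a, b, c, d, he, hf, hab, hcd, hpat⟩ := hcr
    obtain ⟨h1, h2⟩ := sym2_sorted_eq (Fin.lt_def.mpr hxw) hab he
    subst h1
    subst h2
    refine ⟨c, d, hf, Fin.lt_def.mp hcd, ?_⟩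
    rcases hpat with ⟨u1, u2, u3⟩ | ⟨u1, u2, u3⟩
    · exact Or.inl ⟨Fin.lt_def.mp u1, Fin.lt_def.mp u2, Fin.lt_def.mp u3⟩
    · exact Or.inr ⟨Fin.lt_def.mp u1, Fin.lt_def.mp u2, Fin.lt_def.mp u3⟩
  set Starter : Fin n → Prop := fun s0 => ¬ R₀ s0 ∧ ∃ x c : Fin n, (x : ℕ) < i ∧
      s(x, s0) ∈ T₂ \ T₁ ∧ s(c, s0) ∈ T₁ ∧ (c : ℕ) < (x : ℕ) with hStarter
  have noStarter : ∀ s0 : Fin n, ¬ Starter s0 := by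
    have key : ∀ N : ℕ, ∀ s0 : Fin n, (s0 : ℕ) < N → ¬ Starter s0 := by
      intro N
      induction N with
      | zero => intro s0 h; exact absurd h (Nat.not_lt_zero _)
      | succ N ih =>
        rintro s0 hs0N ⟨hRs, x, c, hxi, hxs, hcs, hcx⟩
        have hsi : i ≤ (s0 : ℕ) := (k4 s0 hRs).1
        obtain ⟨gg, hggT₁, hcr⟩ := hcon _ hxs
        have hxs2 : s(x, s0) ∈ T₂ := (Finset.mem_sdiff.mp hxs).1
        have hxw : (x : ℕ) < (s0 : ℕ) := by omega
        obtain ⟨c', d', rfl, hc'd', hpat⟩ := k6 x s0 hxw gg hggT₁ hcr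
        have hggT₂ : s(c', d') ∉ T₂ := fun h => hnc₂ _ hxs2 _ h hcr
        rcases hpat with ⟨u1, u2, u3⟩ | ⟨u1, u2, u3⟩
        · have hcrx : Cross s(c, s0) s(c', d') :=
            ⟨c, s0, c', d', rfl, rfl, Fin.lt_def.mpr (by omega), Fin.lt_def.mpr (by omega),
              Or.inl ⟨Fin.lt_def.mpr (by omega), Fin.lt_def.mpr (by omega),
                Fin.lt_def.mpr (by omega)⟩⟩
          exact hnc₁ _ hcs _ hggT₁ hcrx
        · have hRc' : R₀ c' := k1 c' (by omega)
          have hRd' : ¬ R₀ d' := by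
            intro hRd'
            exact hggT₂ (k3 c' d' hggT₁ (Fin.ne_of_val_ne (by omega)) hRc' hRd')
          obtain ⟨hd'i, xd, hxdi, hxdmem⟩ := k4 d' hRd'
          have hxxd : (x : ℕ) ≤ (xd : ℕ) :=
            k5 xd d' x s0 (Finset.mem_sdiff.mp hxdmem).1 hxs2 hxdi hxi hd'i (by omega)
              (by omega)
          exact ih d' (by omega) ⟨hRd', xd, c', hxdi, hxdmem, hggT₁, by omega⟩
    exact fun s0 => key ((s0 : ℕ) + 1) s0 (by omega)
  set Q : Fin n → Prop := fun s0 => ¬ R₀ s0 ∧ ∃ ep : Fin n, s(s0, ep) ∈ T₁ ∧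
      ∀ t : Fin n, ¬ R₀ t → (t : ℕ) < (ep : ℕ) with hQ
  have noQ : ∀ s0 : Fin n, ¬ Q s0 := by
    have key : ∀ N : ℕ, ∀ s0 : Fin n, (s0 : ℕ) < N → ¬ Q s0 := by
      intro N
      induction N with
      | zero => intro s0 h; exact absurd h (Nat.not_lt_zero _)
      | succ N ih =>
        rintro s0 hs0N ⟨hRs, ep, hsep, hbound⟩
        obtain ⟨hsi, xs, hxsi, hxsmem⟩ := k4 s0 hRs
        have hxs2 : s(xs, s0) ∈ T₂ := (Finset.mem_sdiff.mp hxsmem).1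
        obtain ⟨gg, hggT₁, hcr⟩ := hcon _ hxsmem
        have hxw : (xs : ℕ) < (s0 : ℕ) := by omega
        obtain ⟨c', d', rfl, hc'd', hpat⟩ := k6 xs s0 hxw gg hggT₁ hcr
        have hggT₂ : s(c', d') ∉ T₂ := fun h => hnc₂ _ hxs2 _ h hcr
        rcases hpat with ⟨u1, u2, u3⟩ | ⟨u1, u2, u3⟩
        · have hsep_lt : (s0 : ℕ) < (ep : ℕ) := hbound s0 hRs
          have hepd' : (ep : ℕ) ≤ (d' : ℕ) := by
            by_contra hlt
            push_neg at hlt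
            have hcrx : Cross s(c', d') s(s0, ep) :=
              ⟨c', d', s0, ep, rfl, rfl, Fin.lt_def.mpr (by omega),
                Fin.lt_def.mpr (by omega),
                Or.inl ⟨Fin.lt_def.mpr (by omega), Fin.lt_def.mpr (by omega),
                  Fin.lt_def.mpr (by omega)⟩⟩
            exact hnc₁ _ hggT₁ _ hsep hcrx
          have hRd' : R₀ d' := by
            by_contra hnd'
            have := hbound d' hnd'
            omega
          have hRc' : ¬ R₀ c' := by
            intro hRc'
            exact hggT₂ (k3 c' d' hggT₁ (Fin.ne_of_val_ne (by omega)) hRc' hRd')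
          exact ih c' (by omega)
            ⟨hRc', d', hggT₁, fun t ht => by have := hbound t ht; omega⟩
        · have hRc' : R₀ c' := k1 c' (by omega)
          have hRd' : ¬ R₀ d' := by
            intro hRd'
            exact hggT₂ (k3 c' d' hggT₁ (Fin.ne_of_val_ne (by omega)) hRc' hRd')
          obtain ⟨hd'i, xd, hxdi, hxdmem⟩ := k4 d' hRd'
          have hxxd : (xs : ℕ) ≤ (xd : ℕ) :=
            k5 xd d' xs s0 (Finset.mem_sdiff.mp hxdmem).1 hxs2 hxdi hxsi hd'i (by omega)
              (by omega)
          exact noStarter d' ⟨hRd', xd, c', hxdi, hxdmem, hggT₁, by omega⟩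
    exact fun s0 => key ((s0 : ℕ) + 1) s0 (by omega)
  obtain ⟨η, hη⟩ := hne
  have hηT₂ := (Finset.mem_sdiff.mp hη).1
  obtain ⟨a, b, hab, habeq⟩ := edge_rep (hdiag₂ η hηT₂)
  have hexS : ∃ w : Fin n, ¬ R₀ w := by
    rw [habeq] at hη hηT₂
    by_contra hall
    push_neg at hall
    exact (Finset.mem_sdiff.mp hη).2 (k2 a b hηT₂ (ne_of_lt hab) (hall a) (hall b))
  obtain ⟨w1, hw1⟩ := hexS
  set Sfin : Finset (Fin n) := Finset.univ.filter (fun w => ¬ R₀ w) with hSfin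
  have hSne : Sfin.Nonempty := ⟨w1, by simp [hSfin, hw1]⟩
  set ws : Fin n := Sfin.max' hSne with hws
  have hwsS : ¬ R₀ ws := by
    have := Sfin.max'_mem hSne
    simp [hSfin] at this
    exact this
  have hmaxle : ∀ t : Fin n, ¬ R₀ t → (t : ℕ) ≤ (ws : ℕ) := by
    intro t ht
    exact Fin.le_def.mp (Sfin.le_max' t (by simp [hSfin, ht]))
  obtain ⟨hwsi, xw, hxwi, hxwmem⟩ := k4 ws hwsS
  have hxw2 : s(xw, ws) ∈ T₂ := (Finset.mem_sdiff.mp hxwmem).1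
  obtain ⟨gg, hggT₁, hcr⟩ := hcon _ hxwmem
  obtain ⟨c', d', rfl, hc'd', hpat⟩ := k6 xw ws (by omega) gg hggT₁ hcr
  have hggT₂ : s(c', d') ∉ T₂ := fun h => hnc₂ _ hxw2 _ h hcr
  rcases hpat with ⟨u1, u2, u3⟩ | ⟨u1, u2, u3⟩
  · have hRd' : R₀ d' := by
      by_contra hnd'
      have := hmaxle d' hnd'
      omega
    have hRc' : ¬ R₀ c' := by
      intro hRc'
      exact hggT₂ (k3 c' d' hggT₁ (Fin.ne_of_val_ne (by omega)) hRc' hRd')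
    exact noQ c' ⟨hRc', d', hggT₁, fun t ht => by have := hmaxle t ht; omega⟩
  · have hRc' : R₀ c' := k1 c' (by omega)
    have hRd' : ¬ R₀ d' := by
      intro hRd'
      exact hggT₂ (k3 c' d' hggT₁ (Fin.ne_of_val_ne (by omega)) hRc' hRd')
    obtain ⟨hd'i, xd, hxdi, hxdmem⟩ := k4 d' hRd'
    have hxxd : (xw : ℕ) ≤ (xd : ℕ) :=
      k5 xd d' xw ws (Finset.mem_sdiff.mp hxdmem).1 hxw2 hxdi hxwi hd'i (by omega) (by omega)
    exact noStarter d' ⟨hRd', xd, c', hxdi, hxdmem, hggT₁, by omega⟩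

end NCSTAux

theorem main_lemma {n : ℕ} (i : ℕ) (hi : i ≤ n) (T₁ T₂ : Finset (Edge n))
    (h₁ : NCST T₁) (h₂ : NCST T₂)
    (hT₁ : ∀ j : Fin n, (j : ℕ) + 1 < i → s(j, next j) ∈ T₁)
    (hT₂ : ∀ a b : Fin n, s(a, b) ∈ T₂ → (a : ℕ) < i ∨ (b : ℕ) < i) :
    FlipDistLE T₁ T₂ (((T₁ \ T₂) ∪ (T₂ \ T₁)).card / 2) := by
  classical
  open NCSTAux in
  have key : ∀ m : ℕ, ∀ A B : Finset (Edge n), NCST A → NCST B →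
      (∀ j : Fin n, (j : ℕ) + 1 < i → s(j, next j) ∈ A) →
      (∀ a b : Fin n, s(a, b) ∈ B → (a : ℕ) < i ∨ (b : ℕ) < i) →
      (B \ A).card = m → FlipDistLE A B m := by
    intro m
    induction m using Nat.strong_induction_on with
    | _ m ih =>
      intro A B hA hB hAB hBi hcardm
      by_cases hsub : B ⊆ A
      · have hBA : B = A := Finset.eq_of_subset_of_card_le hsub (by rw [hA.1.2.1, hB.1.2.1])
        subst hBA
        simp only [Finset.sdiff_self, Finset.card_empty] at hcardm
        exact ⟨0, by omega, flipSeq_refl B⟩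
      · have hne : (B \ A).Nonempty := Finset.sdiff_nonempty.mpr hsub
        have hmpos : 0 < m := by
          rw [← hcardm]
          exact Finset.card_pos.mpr hne
        by_cases hBorder : ∀ j : Fin n, (j : ℕ) + 1 < i → s(j, next j) ∈ B
        · -- Case B : flip on the A side using an uncrossed edge of B \ A
          obtain ⟨f, hf, hcompat⟩ := KL hi hA hB hAB hBorder hBi hne
          obtain ⟨hfB, hfA⟩ := Finset.mem_sdiff.mp hf
          obtain ⟨u, v, huv, rfl⟩ := edge_rep (hB.1.2.2 _ hfB)
          obtain ⟨e, heA, heB, hst'⟩ := exchange hA.1 hB.1 (ne_of_lt huv) hfB hfA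
          have hA'ncst : NCST (insert s(u, v) (A.erase e)) := by
            refine ⟨hst', ?_⟩
            intro e₁ he₁ e₂ he₂
            rcases Finset.mem_insert.mp he₁ with rfl | he₁'
            · rcases Finset.mem_insert.mp he₂ with heq | he₂'
              · rw [heq]; exact not_cross_self _
              · exact hcompat _ (Finset.mem_of_mem_erase he₂')
            · rcases Finset.mem_insert.mp he₂ with heq | he₂'
              · rw [heq]
                exact fun hc => hcompat _ (Finset.mem_of_mem_erase he₁') (cross_symm hc)
              · exact hA.2 _ (Finset.mem_of_mem_erase he₁') _ (Finset.mem_of_mem_erase he₂')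
          have hA'border : ∀ j : Fin n, (j : ℕ) + 1 < i →
              s(j, next j) ∈ insert s(u, v) (A.erase e) := by
            intro j hj
            have h1 := hAB j hj
            have h2 := hBorder j hj
            have hne'' : s(j, next j) ≠ e := fun h => heB (h ▸ h2)
            exact Finset.mem_insert_of_mem (Finset.mem_erase.mpr ⟨hne'', h1⟩)
          have hdiffeq : B \ insert s(u, v) (A.erase e) = (B \ A).erase s(u, v) := by
            ext z
            simp only [Finset.mem_sdiff, Finset.mem_insert, Finset.mem_erase]
            constructor
            · rintro ⟨hzB, hz2⟩
              push_neg at hz2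
              obtain ⟨hz2a, hz2b⟩ := hz2
              refine ⟨hz2a, hzB, ?_⟩
              intro hzA
              exact hz2b (fun h => heB (h ▸ hzB)) hzA
            · rintro ⟨hzf, hzB, hzA⟩
              refine ⟨hzB, ?_⟩
              push_neg
              exact ⟨hzf, fun _ => hzA⟩
          have hcard' : (B \ insert s(u, v) (A.erase e)).card = m - 1 := by
            rw [hdiffeq, Finset.card_erase_of_mem hf, hcardm]
          obtain ⟨k, hk, hseq⟩ := ih (m - 1) (by omega) (insert s(u, v) (A.erase e)) B
            hA'ncst hB hA'border hBi hcard'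
          have hflip : Flip A (insert s(u, v) (A.erase e)) :=
            ⟨hA, hA'ncst, e, heA, s(u, v), hfA, rfl⟩
          exact ⟨k + 1, by omega, flipSeq_cons hflip hseq⟩
        · -- Case A : flip on the B side using a missing border edge
          push_neg at hBorder
          obtain ⟨j, hj, hjB⟩ := hBorder
          have hjn : (j : ℕ) + 1 < n := by omega
          have hnextval : ((next j : Fin n) : ℕ) = (j : ℕ) + 1 := by
            simp only [next]
            exact Nat.mod_eq_of_lt hjn
          have hjA := hAB j hj
          have hune : j ≠ next j := by
            intro h
            have := congrArg Fin.val h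
            omega
          obtain ⟨e', he'B, he'A, hst'⟩ := exchange hB.1 hA.1 hune hjA hjB
          have hB'ncst : NCST (insert s(j, next j) (B.erase e')) := by
            refine ⟨hst', ?_⟩
            intro e₁ he₁ e₂ he₂
            rcases Finset.mem_insert.mp he₁ with rfl | he₁'
            · exact (border_compat hjn e₂).1
            · rcases Finset.mem_insert.mp he₂ with heq | he₂'
              · rw [heq]
                exact (border_compat hjn e₁).2
              · exact hB.2 _ (Finset.mem_of_mem_erase he₁') _ (Finset.mem_of_mem_erase he₂')
          have hB'i : ∀ a b : Fin n, s(a, b) ∈ insert s(j, next j) (B.erase e') →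
              (a : ℕ) < i ∨ (b : ℕ) < i := by
            intro a b hmem
            rcases Finset.mem_insert.mp hmem with heq | hmem'
            · rw [Sym2.eq_iff] at heq
              rcases heq with ⟨h1, h2⟩ | ⟨h1, h2⟩
              · left; rw [h1]; omega
              · left; rw [h1, hnextval]; omega
            · exact hBi a b (Finset.mem_of_mem_erase hmem')
          have hdiffeq : insert s(j, next j) (B.erase e') \ A = (B \ A).erase e' := by
            ext z
            simp only [Finset.mem_sdiff, Finset.mem_insert, Finset.mem_erase]
            constructor
            · rintro ⟨hz1, hzA⟩
              rcases hz1 with rfl | ⟨hze', hzB⟩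
              · exact absurd hjA hzA
              · exact ⟨hze', hzB, hzA⟩
            · rintro ⟨hze', hzB, hzA⟩
              exact ⟨Or.inr ⟨hze', hzB⟩, hzA⟩
          have hcard' : (insert s(j, next j) (B.erase e') \ A).card = m - 1 := by
            rw [hdiffeq, Finset.card_erase_of_mem (Finset.mem_sdiff.mpr ⟨he'B, he'A⟩), hcardm]
          obtain ⟨k, hk, hseq⟩ := ih (m - 1) (by omega) A (insert s(j, next j) (B.erase e'))
            hA hB'ncst hAB hB'i hcard'
          have hflip : Flip (insert s(j, next j) (B.erase e')) B := by
            refine ⟨hB'ncst, hB, s(j, next j), Finset.mem_insert_self _ _, e', ?_, ?_⟩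
            · intro hmem
              rcases Finset.mem_insert.mp hmem with heq | hmem'
              · exact hjB (heq ▸ he'B)
              · exact (Finset.mem_erase.mp hmem').1 rfl
            · rw [Finset.erase_insert (fun h => hjB (Finset.mem_of_mem_erase h)),
                Finset.insert_erase he'B]
          exact ⟨k + 1, by omega, flipSeq_snoc hseq hflip⟩
  have hcards : (T₁ \ T₂).card = (T₂ \ T₁).card :=
    Finset.card_sdiff_comm (by rw [h₁.1.2.1, h₂.1.2.1])
  have hunion : ((T₁ \ T₂) ∪ (T₂ \ T₁)).card = (T₁ \ T₂).card + (T₂ \ T₁).card :=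
    Finset.card_union_of_disjoint disjoint_sdiff_sdiff
  have hmain := key ((T₂ \ T₁).card) T₁ T₂ h₁ h₂ hT₁ hT₂ rfl
  have heq : ((T₁ \ T₂) ∪ (T₂ \ T₁)).card / 2 = (T₂ \ T₁).card := by omega
  rwa [heq]
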